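/- Let G be a finite simple non-complete graph satisfying the LexBFS property ordering, with last vertex z, and suppose every neighbor x of z satisfies N(x) ⊆ N[z]. Then for any two neighbors x, y of z, x and y are adjacent; consequently N[x] = N[z] for every neighbor x of z. -/
import Mathlib


/-- In a non-complete graph with a LexBFS ordering (last vertex `z`),
if every neighbor `x` of `z` satisfies `N(x) ⊆ N[z]`, then any two neighbors of `z`
are adjacent, and consequently `N[x] = N[z]` for every neighbor `x` of `z`. -/
theorem stmt_2 {V : Type*} [Fintype V] [LinearOrder V] (G : SimpleGraph V)
    (hnc : ∃ u v : V, u ≠ v ∧ ¬ G.Adj u v)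
    (hlex : ∀ a b c : V, c < b → b < a → G.Adj c a → ¬ G.Adj c b →
      ∃ d : V, d < c ∧ G.Adj d b ∧ ¬ G.Adj d a)
    (z : V) (hz : ∀ w : V, w ≤ z)
    (hsub : ∀ x : V, G.Adj z x → G.neighborSet x ⊆ {w : V | w = z ∨ G.Adj z w}) :
    (∀ x y : V, G.Adj z x → G.Adj z y → x ≠ y → G.Adj x y) ∧
    (∀ x : V, G.Adj z x →
      {w : V | w = x ∨ G.Adj x w} = {w : V | w = z ∨ G.Adj z w}) := by
  have key : ∀ x y : V, G.Adj z x → G.Adj z y → x < y → G.Adj x y := by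
    intro x y hx hy hxy
    by_contra hne
    have hyz : y < z := lt_of_le_of_ne (hz y) (G.ne_of_adj hy).symm
    obtain ⟨d, hdx, hdy, hdz⟩ := hlex z y x hxy hyz hx.symm hne
    have hd : d ∈ G.neighborSet y := hdy.symm
    rcases hsub y hy hd with h | h
    · exact absurd (h ▸ hdx) (not_lt_of_ge (hz x))
    · exact hdz h.symm
  have main : ∀ x y : V, G.Adj z x → G.Adj z y → x ≠ y → G.Adj x y := by
    intro x y hx hy hne
    rcases lt_or_gt_of_ne hne with h | h
    · exact key x y hx hy h
    · exact (key y x hy hx h).symm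
  refine ⟨main, fun x hx => ?_⟩
  ext w
  simp only [Set.mem_setOf_eq]
  constructor
  · rintro (rfl | h)
    · exact Or.inr hx
    · exact hsub x hx h
  · rintro (rfl | h)
    · exact Or.inr hx.symm
    · by_cases hwx : w = x
      · exact Or.inl hwx
      · exact Or.inr ((main x w hx h (Ne.symm hwx)).symm).symm
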